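/- With the notation of the previous statement, define ℋ_x^r := {h ∈ ℝ^d : x + hY ≥ r 𝒬-q.s.} for r > 0. Then Ri(ℋ_x) ⊆ ⋃_{r ∈ ℚ, r>0} ℋ_x^r ⊆ ℋ_x, and consequently the closure of ⋃_{r ∈ ℚ, r>0} ℋ_x^r in ℝ^d equals ℋ_x. -/

import Mathlib

open Set MeasureTheory Metric

/-- With `ℋ_x^r = {h : x + h⬝Y ≥ r 𝒬-q.s.}` for `r > 0`,
`Ri(ℋ_x) ⊆ ⋃_{r ∈ ℚ, r>0} ℋ_x^r ⊆ ℋ_x` and the closure of the union equals `ℋ_x`. -/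
theorem ri_subset_union_Hxr_and_closure
    {d : ℕ} {Ω : Type*} [MeasurableSpace Ω]
    (Y : Ω → EuclideanSpace ℝ (Fin d)) (hY : Measurable Y)
    (b : ℝ) (hb : 0 < b) (hYb : ∀ ω, ∀ i : Fin d, -b ≤ Y ω i)
    (𝒬 : Set (Measure Ω)) (h𝒬ne : 𝒬.Nonempty)
    (h𝒬prob : ∀ P ∈ 𝒬, IsProbabilityMeasure P)
    (x : ℝ) (hx : 0 < x) :
    (intrinsicInterior ℝ {h : EuclideanSpace ℝ (Fin d) |
        ∀ P ∈ 𝒬, P {ω | 0 ≤ x + (inner ℝ h (Y ω) : ℝ)} = 1} ⊆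
      ⋃ r ∈ {q : ℚ | 0 < q}, {h : EuclideanSpace ℝ (Fin d) |
        ∀ P ∈ 𝒬, P {ω | (r : ℝ) ≤ x + (inner ℝ h (Y ω) : ℝ)} = 1}) ∧
    (⋃ r ∈ {q : ℚ | 0 < q}, {h : EuclideanSpace ℝ (Fin d) |
        ∀ P ∈ 𝒬, P {ω | (r : ℝ) ≤ x + (inner ℝ h (Y ω) : ℝ)} = 1} ⊆
      {h : EuclideanSpace ℝ (Fin d) |
        ∀ P ∈ 𝒬, P {ω | 0 ≤ x + (inner ℝ h (Y ω) : ℝ)} = 1}) ∧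
    closure (⋃ r ∈ {q : ℚ | 0 < q}, {h : EuclideanSpace ℝ (Fin d) |
        ∀ P ∈ 𝒬, P {ω | (r : ℝ) ≤ x + (inner ℝ h (Y ω) : ℝ)} = 1}) =
      {h : EuclideanSpace ℝ (Fin d) |
        ∀ P ∈ 𝒬, P {ω | 0 ≤ x + (inner ℝ h (Y ω) : ℝ)} = 1} := by
  classical
  -- Part 2 : the union is contained in ℋ_x
  have key2 : (⋃ r ∈ {q : ℚ | 0 < q}, {h : EuclideanSpace ℝ (Fin d) |
        ∀ P ∈ 𝒬, P {ω | (r : ℝ) ≤ x + (inner ℝ h (Y ω) : ℝ)} = 1}) ⊆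
      {h : EuclideanSpace ℝ (Fin d) |
        ∀ P ∈ 𝒬, P {ω | 0 ≤ x + (inner ℝ h (Y ω) : ℝ)} = 1} := by
    intro h hh
    simp only [mem_iUnion, mem_setOf_eq] at hh
    obtain ⟨q, hq, hmem⟩ := hh
    intro P hP
    haveI := h𝒬prob P hP
    refine le_antisymm prob_le_one ?_
    rw [← hmem P hP]
    refine measure_mono fun ω hω => ?_
    have hq0 : (0:ℝ) ≤ (q:ℝ) := by exact_mod_cast hq.le
    exact le_trans hq0 hω
  -- Part 1 : relative interior is contained in the union
  have key1 : intrinsicInterior ℝ {h : EuclideanSpace ℝ (Fin d) |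
        ∀ P ∈ 𝒬, P {ω | 0 ≤ x + (inner ℝ h (Y ω) : ℝ)} = 1} ⊆
      ⋃ r ∈ {q : ℚ | 0 < q}, {h : EuclideanSpace ℝ (Fin d) |
        ∀ P ∈ 𝒬, P {ω | (r : ℝ) ≤ x + (inner ℝ h (Y ω) : ℝ)} = 1} := by
    intro h hh
    set S := {h : EuclideanSpace ℝ (Fin d) |
        ∀ P ∈ 𝒬, P {ω | 0 ≤ x + (inner ℝ h (Y ω) : ℝ)} = 1} with hSdef
    rw [mem_intrinsicInterior] at hh
    obtain ⟨y, hy, hyh⟩ := hh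
    have h0S : (0 : EuclideanSpace ℝ (Fin d)) ∈ S := by
      intro P hP
      haveI := h𝒬prob P hP
      have huniv : {ω | (0:ℝ) ≤ x + (inner ℝ (0 : EuclideanSpace ℝ (Fin d)) (Y ω) : ℝ)} = univ := by
        ext ω; simp [inner_zero_left, hx.le]
      rw [huniv]; exact measure_univ
    have hmemspan : ∀ t : ℝ, (1 + t) • h ∈ affineSpan ℝ S := by
      intro t
      have h0 : (0 : EuclideanSpace ℝ (Fin d)) ∈ affineSpan ℝ S := subset_affineSpan ℝ S h0S
      have hh' : h ∈ affineSpan ℝ S := hyh ▸ y.2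
      have := AffineMap.lineMap_mem (Q := affineSpan ℝ S) (1 + t) h0 hh'
      simpa [AffineMap.lineMap_apply] using this
    have fcont : Continuous (fun t : ℝ =>
        (⟨(1 + t) • h, hmemspan t⟩ : affineSpan ℝ S)) :=
      Continuous.subtype_mk (by fun_prop) _
    have f0 : (⟨(1 + 0) • h, hmemspan 0⟩ : affineSpan ℝ S) = y :=
      Subtype.ext (show (1 + 0 : ℝ) • h = ↑y by rw [hyh]; norm_num)
    have hnhds : (fun t : ℝ => (⟨(1 + t) • h, hmemspan t⟩ : affineSpan ℝ S)) ⁻¹'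
        interior (Subtype.val ⁻¹' S) ∈ nhds (0 : ℝ) := by
      refine (isOpen_interior.preimage fcont).mem_nhds ?_
      rw [mem_preimage, f0]; exact hy
    obtain ⟨δ, hδ, hball⟩ := Metric.mem_nhds_iff.mp hnhds
    set ε := δ / 2 with hεdef
    have hε : 0 < ε := half_pos hδ
    have hεball : ε ∈ ball (0:ℝ) δ := by
      rw [mem_ball, Real.dist_eq, sub_zero, abs_of_pos hε]
      linarith
    have hstep : (⟨(1 + ε) • h, hmemspan ε⟩ : affineSpan ℝ S) ∈
        interior (Subtype.val ⁻¹' S) := hball hεball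
    have hεmem : (1 + ε) • h ∈ S := by
      have h2 : (⟨(1 + ε) • h, hmemspan ε⟩ : affineSpan ℝ S) ∈ Subtype.val ⁻¹' S :=
        interior_subset hstep
      exact h2
    have h1ε : (0:ℝ) < 1 + ε := by linarith
    obtain ⟨q, hq0, hqlt⟩ := exists_rat_btwn (show (0:ℝ) < ε * x / (1 + ε) by positivity)
    have hq : (0:ℚ) < q := by exact_mod_cast hq0
    have hq' : (q:ℝ) * (1 + ε) < ε * x := (lt_div_iff₀ h1ε).mp hqlt
    simp only [mem_iUnion, mem_setOf_eq]
    refine ⟨q, hq, fun P hP => ?_⟩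
    haveI := h𝒬prob P hP
    refine le_antisymm prob_le_one ?_
    rw [← hεmem P hP]
    refine measure_mono fun ω hω => ?_
    simp only [mem_setOf_eq] at hω ⊢
    rw [real_inner_smul_left] at hω
    nlinarith [hω, hq', hε]
  -- closedness of ℋ_x
  have hclosed : IsClosed {h : EuclideanSpace ℝ (Fin d) |
      ∀ P ∈ 𝒬, P {ω | 0 ≤ x + (inner ℝ h (Y ω) : ℝ)} = 1} := by
    have heq : {h : EuclideanSpace ℝ (Fin d) |
        ∀ P ∈ 𝒬, P {ω | 0 ≤ x + (inner ℝ h (Y ω) : ℝ)} = 1} =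
        ⋂ P ∈ 𝒬, {h : EuclideanSpace ℝ (Fin d) |
          P {ω | 0 ≤ x + (inner ℝ h (Y ω) : ℝ)} = 1} := by
      ext h; simp [mem_iInter]
    rw [heq]
    refine isClosed_biInter fun P hP => ?_
    haveI := h𝒬prob P hP
    have hmeas : ∀ g : EuclideanSpace ℝ (Fin d),
        MeasurableSet {ω | 0 ≤ x + (inner ℝ g (Y ω) : ℝ)} := by
      intro g
      have hcl : IsClosed {v : EuclideanSpace ℝ (Fin d) | 0 ≤ x + (inner ℝ g v : ℝ)} :=
        isClosed_le continuous_const (continuous_const.add (continuous_const.inner continuous_id))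
      exact hcl.measurableSet.preimage hY
    refine IsSeqClosed.isClosed fun hs h hmem hlim => ?_
    have hB : P (⋂ n, {ω | 0 ≤ x + (inner ℝ (hs n) (Y ω) : ℝ)}) = 1 := by
      rw [← prob_compl_eq_zero_iff (MeasurableSet.iInter fun n => hmeas _), compl_iInter]
      exact measure_iUnion_null fun n => by
        rw [prob_compl_eq_zero_iff (hmeas _)]; exact hmem n
    refine le_antisymm prob_le_one ?_
    rw [← hB]
    refine measure_mono fun ω hω => ?_
    simp only [mem_iInter, mem_setOf_eq] at hω ⊢
    have htend : Filter.Tendsto (fun n => x + (inner ℝ (hs n) (Y ω) : ℝ))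
        Filter.atTop (nhds (x + (inner ℝ h (Y ω) : ℝ))) :=
      Filter.Tendsto.const_add _ (Filter.Tendsto.inner hlim tendsto_const_nhds)
    exact ge_of_tendsto' htend hω
  refine ⟨key1, key2, Subset.antisymm (closure_minimal key2 hclosed) ?_⟩
  intro h hh
  have htend : Filter.Tendsto (fun n : ℕ => (1 - (1 / ((n:ℝ) + 1))) • h)
      Filter.atTop (nhds h) := by
    have h1 : Filter.Tendsto (fun n : ℕ => (1 - (1 / ((n:ℝ) + 1)))) Filter.atTop (nhds 1) := by
      have := tendsto_one_div_add_atTop_nhds_zero_nat (𝕜 := ℝ)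
      simpa using Filter.Tendsto.const_sub 1 this
    have := Filter.Tendsto.smul h1 (tendsto_const_nhds (x := h) (f := Filter.atTop (α := ℕ)))
    simpa using this
  refine mem_closure_of_tendsto htend (Filter.Eventually.of_forall fun n => ?_)
  set t : ℝ := 1 / ((n:ℝ) + 1) with htdef
  have ht0 : 0 < t := by positivity
  have hn1 : (1:ℝ) ≤ (n:ℝ) + 1 := by
    have : (0:ℝ) ≤ (n:ℝ) := Nat.cast_nonneg n
    linarith
  have ht1 : t ≤ 1 := by
    rw [htdef, div_le_one (by linarith : (0:ℝ) < (n:ℝ) + 1)]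
    linarith
  obtain ⟨q, hq0, hqlt⟩ := exists_rat_btwn (show (0:ℝ) < t * x by positivity)
  simp only [mem_iUnion, mem_setOf_eq]
  refine ⟨q, by exact_mod_cast hq0, fun P hP => ?_⟩
  haveI := h𝒬prob P hP
  refine le_antisymm prob_le_one ?_
  rw [← hh P hP]
  refine measure_mono fun ω hω => ?_
  simp only [mem_setOf_eq] at hω ⊢
  rw [real_inner_smul_left]
  nlinarith [mul_nonneg (by linarith : (0:ℝ) ≤ 1 - t) hω, hqlt]
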